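/- Let (A,B) be an m×n bimatrix game with all payoff entries in [0,1]. Fix any pure strategy i of the row player; let j be a pure best response of the column player to i (i.e., B_{ij} ≥ B_{ij'} for all j'), and let k be a pure best response of the row player to j (i.e., A_{kj} ≥ A_{i'j} for all i'). Then the profile in which the row player plays i with probability 1/2 and k with probability 1/2, and the column player plays j with probability 1, is a (1/2)-approximate Nash equilibrium. -/

import Mathlib

open Matrix

/-- A probability vector over a finite index set. -/
def IsProbVec {ι : Type*} [Fintype ι] (x : ι → ℝ) : Prop :=
  (∀ i, 0 ≤ x i) ∧ ∑ i, x i = 1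

/-- `ε`-approximate Nash equilibrium of the bimatrix game `(A, B)`: no player can gain
more than `ε` by a unilateral mixed deviation. -/
def IsEpsNashEq {ι κ : Type*} [Fintype ι] [Fintype κ]
    (A B : Matrix ι κ ℝ) (ε : ℝ) (x : ι → ℝ) (y : κ → ℝ) : Prop :=
  IsProbVec x ∧ IsProbVec y ∧
    (∀ x' : ι → ℝ, IsProbVec x' →
      dotProduct x' (A.mulVec y) - ε ≤ dotProduct x (A.mulVec y)) ∧
    (∀ y' : κ → ℝ, IsProbVec y' →
      dotProduct x (B.mulVec y') - ε ≤ dotProduct x (B.mulVec y))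

/-- **The simple 1/2-approximation algorithm** (Daskalakis–Mehta–Papadimitriou): in a
bimatrix game with payoffs in `[0,1]`, pick any row strategy `i`, a pure best response
`j` of the column player to `i`, and a pure best response `k` of the row player to `j`.
Then (row plays `i` and `k` with probability 1/2 each; column plays `j`) is a
`1/2`-approximate Nash equilibrium. -/
theorem half_approximate_nash {m n : ℕ}
    (A B : Matrix (Fin m) (Fin n) ℝ)
    (hA : ∀ i j, A i j ∈ Set.Icc (0 : ℝ) 1) (hB : ∀ i j, B i j ∈ Set.Icc (0 : ℝ) 1)
    (i k : Fin m) (j : Fin n)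
    (hj : ∀ j' : Fin n, B i j' ≤ B i j)
    (hk : ∀ i' : Fin m, A i' j ≤ A k j) :
    IsEpsNashEq A B (1 / 2)
      (fun t => (if t = i then (1 : ℝ) / 2 else 0) + (if t = k then (1 : ℝ) / 2 else 0))
      (fun t => if t = j then (1 : ℝ) else 0) := by
  set x : Fin m → ℝ := fun t => (if t = i then (1 : ℝ) / 2 else 0) + (if t = k then (1 : ℝ) / 2 else 0) with hxdef
  set y : Fin n → ℝ := fun t => if t = j then (1 : ℝ) else 0 with hydef
  have hmv : ∀ t, A.mulVec y t = A t j := by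
    intro t
    simp [hydef, Matrix.mulVec, dotProduct, mul_ite]
  have hdotx : ∀ v : Fin m → ℝ, dotProduct x v = v i / 2 + v k / 2 := by
    intro v
    simp [hxdef, dotProduct, add_mul, Finset.sum_add_distrib, ite_mul]; ring
  refine ⟨⟨fun t => by simp only [hxdef]; positivity, ?_⟩,
    ⟨fun t => by simp only [hydef]; split <;> norm_num, by simp [hydef]⟩, ?_, ?_⟩
  · simp [hxdef, Finset.sum_add_distrib]; norm_num
  · intro x' hx'
    have h1 : dotProduct x' (A.mulVec y) ≤ A k j := by
      calc dotProduct x' (A.mulVec y) = ∑ t, x' t * A t j := by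
            simp [dotProduct, hmv]
        _ ≤ ∑ t, x' t * A k j := by
            refine Finset.sum_le_sum fun t _ => ?_
            exact mul_le_mul_of_nonneg_left (hk t) (hx'.1 t)
        _ = A k j := by rw [← Finset.sum_mul, hx'.2, one_mul]
    have h2 := (hA i j).1
    have h3 := (hA k j).2
    rw [hdotx, hmv, hmv]
    linarith
  · intro y' hy'
    have hb1 : ∀ t, B.mulVec y' t ≤ B t j ⊔ 1 := by
      intro t
      calc B.mulVec y' t = ∑ s, B t s * y' s := by
            simp [Matrix.mulVec, dotProduct, mul_comm]
        _ ≤ ∑ s, 1 * y' s := by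
            refine Finset.sum_le_sum fun s _ => ?_
            exact mul_le_mul_of_nonneg_right (hB t s).2 (hy'.1 s)
        _ = 1 := by simp only [one_mul]; exact hy'.2
        _ ≤ B t j ⊔ 1 := le_max_right _ _
    have hbi : B.mulVec y' i ≤ B i j := by
      calc B.mulVec y' i = ∑ s, B i s * y' s := by
            simp [Matrix.mulVec, dotProduct, mul_comm]
        _ ≤ ∑ s, B i j * y' s := by
            refine Finset.sum_le_sum fun s _ => ?_
            exact mul_le_mul_of_nonneg_right (hj s) (hy'.1 s)
        _ = B i j := by rw [← Finset.mul_sum, hy'.2, mul_one]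
    have hbk : B.mulVec y' k ≤ 1 := by
      calc B.mulVec y' k = ∑ s, B k s * y' s := by
            simp [Matrix.mulVec, dotProduct, mul_comm]
        _ ≤ ∑ s, 1 * y' s := by
            refine Finset.sum_le_sum fun s _ => ?_
            exact mul_le_mul_of_nonneg_right (hB k s).2 (hy'.1 s)
        _ = 1 := by simp only [one_mul]; exact hy'.2
    have hmvB : ∀ t, B.mulVec y t = B t j := by
      intro t
      simp [hydef, Matrix.mulVec, dotProduct, mul_ite]
    have h2 := (hB k j).1
    rw [hdotx, hdotx, hmvB, hmvB]
    linarith
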